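/- Let q > 1 be real, n ≥ 1 a natural number, and let h ∈ ℂⁿ be the vector with coordinates h_k = q^{k/2} for k = 1, …, n. Suppose T : ℂⁿ → ℂⁿ is a ℂ-linear map with T(h) = h, and C ≥ 0 is a constant such that for r = 0 and r = 1 and for every x ∈ ℂⁿ one has Σ_{k=1}^n q^{-kr}·|(Tx)_k| ≤ C·max_{1≤k≤n} q^{-kr}·|x_k|. Then C ≥ n. -/

import Mathlib

open Complex Finset

/-- If `T : ℂⁿ → ℂⁿ` fixes the vector `h = (q^{1/2}, …, q^{n/2})` and is bounded by `C`
from the weighted `ℓ∞` space to the weighted `ℓ¹` space for both weights `q^{-kr}`,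
`r = 0, 1`, then `C ≥ n`. -/
theorem riesz_thorin_lower_bound (q : ℝ) (hq : 1 < q) (n : ℕ) (hn : 1 ≤ n)
    (h : Fin n → ℂ) (hh : ∀ k : Fin n, h k = (Real.sqrt q : ℂ) ^ (k.1 + 1))
    (T : (Fin n → ℂ) →ₗ[ℂ] (Fin n → ℂ)) (hT : T h = h)
    (C : ℝ) (hC : 0 ≤ C)
    (hbound : ∀ r ∈ ({0, 1} : Set ℕ), ∀ x : Fin n → ℂ,
      ∑ k : Fin n, q ^ (-(((k.1 : ℝ) + 1) * (r : ℝ))) * ‖T x k‖ ≤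
        C * ⨆ k : Fin n, q ^ (-(((k.1 : ℝ) + 1) * (r : ℝ))) * ‖x k‖) :
    (n : ℝ) ≤ C := by
  have hq0 : (0:ℝ) < q := lt_trans one_pos hq
  have hcq0 : (q:ℂ) ≠ 0 := by exact_mod_cast ne_of_gt hq0
  haveI : Nonempty (Fin n) := ⟨⟨0, hn⟩⟩
  set e : Fin n → ℝ := fun k => (k.1 : ℝ) + 1 with he
  set X : ℂ → (Fin n → ℂ) := fun z k => (q:ℂ) ^ ((e k : ℂ) * z) with hX
  set f : ℂ → ℂ := fun z => ∑ j : Fin n, (q:ℂ) ^ (-(e j : ℂ) * z) * T (X z) j with hf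
  -- matrix expansion of f
  have hfeq : ∀ z : ℂ, f z = ∑ j : Fin n, ∑ k : Fin n,
      (T (fun i => if k = i then 1 else 0) j * (q:ℂ) ^ ((-(e j : ℂ) + (e k : ℂ)) * z)) := by
    intro z
    simp only [hf]
    refine Finset.sum_congr rfl fun j _ => ?_
    rw [LinearMap.pi_apply_eq_sum_univ T (X z), Finset.sum_apply, Finset.mul_sum]
    refine Finset.sum_congr rfl fun k _ => ?_
    simp only [Pi.smul_apply, smul_eq_mul, hX]
    rw [add_mul, Complex.cpow_add _ _ hcq0]
    ring
  -- differentiability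
  have hdiff : Differentiable ℂ f := by
    rw [funext hfeq]
    apply Differentiable.fun_sum; intro j _
    apply Differentiable.fun_sum; intro k _
    exact (Differentiable.const_cpow ((differentiable_fun_id).const_mul _)
      (Or.inl hcq0)).const_mul _
  -- boundedness on the closed strip
  have hBdd : BddAbove ((norm ∘ f) ''
      (Complex.HadamardThreeLines.verticalClosedStrip 0 1)) := by
    refine ⟨∑ j : Fin n, ∑ k : Fin n,
      ‖T (fun i => if k = i then 1 else 0) j‖ * q ^ (n : ℝ), ?_⟩
    rintro y ⟨z, hz, rfl⟩
    simp only [Function.comp_apply]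
    rw [hfeq z]
    refine le_trans (norm_sum_le _ _) (Finset.sum_le_sum fun j _ => ?_)
    refine le_trans (norm_sum_le _ _) (Finset.sum_le_sum fun k _ => ?_)
    rw [norm_mul]
    refine mul_le_mul_of_nonneg_left ?_ (norm_nonneg _)
    have h1 : ‖(q:ℂ) ^ ((-(e j : ℂ) + (e k : ℂ)) * z)‖ =
        q ^ ((-(e j) + e k) * z.re) := by
      rw [Complex.norm_cpow_eq_rpow_re_of_pos hq0]
      congr 1
      have h2 : ((-(e j : ℂ) + (e k : ℂ))) = (((-(e j) + e k : ℝ)) : ℂ) := by push_cast; ring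
      rw [h2, Complex.re_ofReal_mul]
    rw [h1]
    apply (Real.rpow_le_rpow_left_iff hq).mpr
    have hz0 : 0 ≤ z.re := hz.1
    have hz1 : z.re ≤ 1 := hz.2
    have hek : e k ≤ (n:ℝ) := by
      have h2 : k.1 + 1 ≤ n := k.2
      simp only [he]
      exact_mod_cast h2
    have hej : (1:ℝ) ≤ e j := by
      have h2 : (0:ℝ) ≤ (j.1:ℝ) := Nat.cast_nonneg _
      simp only [he]; linarith
    have hn1 : (1:ℝ) ≤ (n:ℝ) := by exact_mod_cast hn
    nlinarith
  -- boundary bound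
  have hedge : ∀ r : ℕ, r ∈ ({0, 1} : Set ℕ) → ∀ z : ℂ, z.re = (r : ℝ) →
      ‖f z‖ ≤ C := by
    intro r hr z hz
    have habs : ∀ (c : ℝ), ‖(q:ℂ) ^ ((c : ℂ) * z)‖ = q ^ (c * (r:ℝ)) := by
      intro c
      rw [Complex.norm_cpow_eq_rpow_re_of_pos hq0, Complex.re_ofReal_mul, hz]
    calc ‖f z‖ ≤ ∑ j : Fin n, ‖(q:ℂ) ^ (-(e j : ℂ) * z) * T (X z) j‖ := by
          simpa only [hf] using (norm_sum_le _ _)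
      _ = ∑ j : Fin n, q ^ (-((e j) * (r:ℝ))) * ‖T (X z) j‖ := by
          refine Finset.sum_congr rfl fun j _ => ?_
          rw [norm_mul]
          congr 1
          have := habs (-(e j))
          push_cast at this
          rw [this, neg_mul]
      _ ≤ C * ⨆ k : Fin n, q ^ (-((e k) * (r:ℝ))) * ‖X z k‖ := hbound r hr (X z)
      _ = C * 1 := by
          congr 1
          have hone : ∀ k : Fin n, q ^ (-((e k) * (r:ℝ))) * ‖X z k‖ = 1 := by
            intro k
            rw [hX]
            simp only
            rw [habs (e k), ← Real.rpow_add hq0]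
            ring_nf
            exact Real.rpow_zero q
          simp only [hone]
          exact ciSup_const
      _ = C := mul_one C
  -- value at 1/2
  have key : ∀ j : Fin n, ((Real.sqrt q : ℝ) : ℂ) ^ (j.1 + 1) =
      (q:ℂ) ^ ((e j : ℂ) * (1/2 : ℂ)) := by
    intro j
    have h2 : Real.sqrt q ^ (j.1 + 1) = q ^ ((e j) * (1/2 : ℝ)) := by
      rw [he, ← Real.rpow_natCast (Real.sqrt q) (j.1+1), Real.sqrt_eq_rpow,
        ← Real.rpow_mul hq0.le]
      congr 1
      push_cast; ring
    calc ((Real.sqrt q : ℝ) : ℂ) ^ (j.1 + 1) = ((Real.sqrt q ^ (j.1+1) : ℝ) : ℂ) := by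
          push_cast; ring
      _ = (q:ℂ) ^ ((e j : ℂ) * (1/2 : ℂ)) := by
          rw [h2, Complex.ofReal_cpow hq0.le]; congr 1; push_cast; ring
  have hmid : f (1/2 : ℂ) = (n : ℂ) := by
    have hXh : X (1/2 : ℂ) = h := by
      funext k
      rw [hX, hh k]
      simp only
      rw [key k]
    rw [hf]
    simp only
    rw [hXh, hT]
    have hone : ∀ j : Fin n, (q:ℂ) ^ (-(e j : ℂ) * (1/2 : ℂ)) * h j = 1 := by
      intro j
      rw [hh j, key j, ← Complex.cpow_add _ _ hcq0]
      ring_nf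
      exact Complex.cpow_zero _
    simp only [hone]
    simp
  -- apply three lines
  have h3 := Complex.HadamardThreeLines.norm_le_interp_of_mem_verticalClosedStrip₀₁' f
    (z := (1/2 : ℂ)) (a := C) (b := C)
    (by constructor <;> norm_num)
    (hdiff.diffContOnCl)
    hBdd
    (fun z hz => by
      simpa using hedge 0 (by simp) z (by simpa using hz))
    (fun z hz => by
      simpa using hedge 1 (by simp) z (by simpa using hz))
  rw [hmid] at h3
  have hre : ((1:ℂ)/2).re = 1/2 := by norm_num
  rw [hre] at h3
  have hnorm : ‖(n : ℂ)‖ = (n : ℝ) := by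
    simp
  rw [hnorm] at h3
  have hCC : C ^ ((1:ℝ) - 1/2) * C ^ ((1:ℝ)/2) = C := by
    rw [← Real.rpow_add' hC (by norm_num)]
    norm_num
  exact le_trans h3 (le_of_eq hCC)
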